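/- arXiv:0704.2897 — 4 statements merged into one kernel-verified Lean document; each statement's English description precedes it below -/
import Mathlib

section
/- In any finite quotient of the Baumslag group G = ⟨a, t | (a^t)⁻¹ a (a^t) = a²⟩ (where a^t = t⁻¹ a t), the image of a is trivial. -/
/-- The single relator `(t⁻¹at)⁻¹ a (t⁻¹at) * (a²)⁻¹` of the Baumslag group,
with generators `a = FreeGroup.of 0`, `t = FreeGroup.of 1`. -/
def baumslagRels : Set (FreeGroup (Fin 2)) :=
  { ((FreeGroup.of 1)⁻¹ * FreeGroup.of 0 * FreeGroup.of 1)⁻¹ * FreeGroup.of 0 *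
      ((FreeGroup.of 1)⁻¹ * FreeGroup.of 0 * FreeGroup.of 1) * (FreeGroup.of 0 ^ 2)⁻¹ }

/-- The Baumslag group `G = ⟨a, t ∣ (aᵗ)⁻¹ a aᵗ = a²⟩`. -/
abbrev Baumslag : Type := PresentedGroup baumslagRels

noncomputable def bgA : Baumslag := PresentedGroup.of 0
noncomputable def bgT : Baumslag := PresentedGroup.of 1

/-- If `n ∣ 2 ^ n - 1` then `n = 1`. -/
lemma aux_dvd_two_pow_sub_one {n : ℕ} (hn : 0 < n) (h : n ∣ 2 ^ n - 1) : n = 1 := by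
  by_contra hne
  set p := n.minFac with hp_def
  have hp : p.Prime := Nat.minFac_prime hne
  haveI : Fact p.Prime := ⟨hp⟩
  have hpn : p ∣ n := Nat.minFac_dvd n
  have hpd : p ∣ 2 ^ n - 1 := hpn.trans h
  have h1le : 1 ≤ 2 ^ n := Nat.one_le_two_pow
  -- 2 ^ n = 1 in ZMod p
  have h2 : (2 : ZMod p) ^ n = 1 := by
    have hmod : 1 ≡ 2 ^ n [MOD p] := (Nat.modEq_iff_dvd' h1le).2 hpd
    have := (ZMod.natCast_eq_natCast_iff _ _ _).2 hmod
    push_cast at this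
    exact this.symm
  have h2ne : (2 : ZMod p) ≠ 0 := by
    intro h0
    rw [h0, zero_pow hn.ne'] at h2
    exact zero_ne_one h2
  set d := orderOf (2 : ZMod p) with hd_def
  have hd_n : d ∣ n := orderOf_dvd_of_pow_eq_one h2
  have hd_p : d ∣ p - 1 := orderOf_dvd_of_pow_eq_one (ZMod.pow_card_sub_one_eq_one h2ne)
  have hd1 : d = 1 := by
    by_contra hd1
    obtain ⟨q, hq, hqd⟩ := Nat.exists_prime_and_dvd hd1
    have hqn : q ∣ n := hqd.trans hd_n
    have hq_ge : p ≤ q := Nat.minFac_le_of_dvd hq.two_le hqn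
    have hqp : q ∣ p - 1 := hqd.trans hd_p
    have hp1pos : 0 < p - 1 := by have := hp.two_le; omega
    have : q ≤ p - 1 := Nat.le_of_dvd hp1pos hqp
    omega
  have h21 : (2 : ZMod p) = 1 := by
    have := pow_orderOf_eq_one (2 : ZMod p)
    rwa [← hd_def, hd1, pow_one] at this
  have hcast : ((2 : ℕ) : ZMod p) = ((1 : ℕ) : ZMod p) := by push_cast; simpa using h21
  have hmod : 1 ≡ 2 [MOD p] := ((ZMod.natCast_eq_natCast_iff _ _ _).1 hcast).symm
  have : p ∣ 1 := by simpa using (Nat.modEq_iff_dvd' (by norm_num)).1 hmod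
  exact hp.one_lt.ne' (Nat.dvd_one.1 this)

theorem stmt_2 (F : Type) [Group F] [Finite F] (φ : Baumslag →* F)
    (hφ : Function.Surjective φ) : φ bgA = 1 := by
  -- the relation in Baumslag
  have hrel0 : (bgT⁻¹ * bgA * bgT)⁻¹ * bgA * (bgT⁻¹ * bgA * bgT) * (bgA ^ 2)⁻¹ = 1 := by
    have hmem : (((FreeGroup.of 1)⁻¹ * FreeGroup.of 0 * FreeGroup.of 1)⁻¹ * FreeGroup.of 0 *
      ((FreeGroup.of 1)⁻¹ * FreeGroup.of 0 * FreeGroup.of 1) * (FreeGroup.of 0 ^ 2)⁻¹)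
        ∈ Subgroup.normalClosure baumslagRels :=
      Subgroup.subset_normalClosure rfl
    have : (QuotientGroup.mk (((FreeGroup.of 1)⁻¹ * FreeGroup.of 0 * FreeGroup.of 1)⁻¹ *
        FreeGroup.of 0 * ((FreeGroup.of 1)⁻¹ * FreeGroup.of 0 * FreeGroup.of 1) *
        (FreeGroup.of 0 ^ 2)⁻¹) : Baumslag) = 1 :=
      (QuotientGroup.eq_one_iff _).2 hmem
    simp [bgA, bgT, PresentedGroup.of, QuotientGroup.mk_mul, QuotientGroup.mk_inv,
      QuotientGroup.mk_pow] at this ⊢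
    exact this
  set x := φ bgA with hx
  set u := φ bgT with hu
  set c := u⁻¹ * x * u with hc
  have hrel : c⁻¹ * x * c = x ^ 2 := by
    have := congrArg φ hrel0
    simp only [map_mul, map_inv, map_pow, map_one] at this
    rw [← hx, ← hu] at this
    exact mul_inv_eq_one.1 (by rw [hc]; exact this)
  -- iterate
  have key : ∀ k : ℕ, c⁻¹ ^ k * x * c ^ k = x ^ (2 ^ k) := by
    intro k
    induction k with
    | zero => simp
    | succ k ih =>
      have : c⁻¹ ^ (k + 1) * x * c ^ (k + 1) = c⁻¹ * (c⁻¹ ^ k * x * c ^ k) * c := by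
        rw [pow_succ, pow_succ']
        group
      rw [this, ih]
      calc c⁻¹ * x ^ (2 ^ k) * c = (c⁻¹ * x * c) ^ (2 ^ k) := by
            rw [show c⁻¹ * x * c = c⁻¹ * x * c⁻¹⁻¹ by rw [inv_inv],
              show c⁻¹ * x ^ (2 ^ k) * c = c⁻¹ * x ^ (2 ^ k) * c⁻¹⁻¹ by rw [inv_inv], conj_pow]
        _ = x ^ (2 ^ (k + 1)) := by rw [hrel, ← pow_mul, pow_succ, Nat.mul_comm]
  -- orders
  have hord : orderOf c = orderOf x := by
    have hsc : SemiconjBy u⁻¹ x c := by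
      unfold SemiconjBy
      rw [hc]; group
    exact (hsc.orderOf_eq u⁻¹).symm
  set n := orderOf x with hn
  have hnpos : 0 < n := by
    have : IsOfFinOrder x := isOfFinOrder_of_finite x
    exact this.orderOf_pos
  have hcn : c ^ n = 1 := by rw [← hord]; exact pow_orderOf_eq_one c
  have hkey := key n
  rw [hcn, inv_pow, hcn] at hkey
  simp at hkey
  -- x = x ^ (2 ^ n)
  have hdvd : n ∣ 2 ^ n - 1 := by
    have hx1 : x ^ (2 ^ n - 1) = 1 := by
      have h1le : 1 ≤ 2 ^ n := Nat.one_le_two_pow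
      have : x ^ (2 ^ n - 1) * x = x ^ (2 ^ n) := by
        rw [← pow_succ, Nat.sub_add_cancel h1le]
      rw [← hkey] at this
      exact mul_right_cancel (by rw [this, one_mul])
    exact orderOf_dvd_of_pow_eq_one hx1
  have : n = 1 := aux_dvd_two_pow_sub_one hnpos hdvd
  rw [hx] at hn ⊢
  exact orderOf_eq_one_iff.1 ((hn ▸ this) : orderOf (φ bgA) = 1)
end

section
/- Every finite quotient of the Baumslag group G = ⟨a, t | (t⁻¹at)⁻¹ a (t⁻¹at) = a²⟩ is cyclic, generated by the image of t. -/
lemma aux_conj {F : Type} [Group F] (x z : F) (hrel : z⁻¹ * x * z = x ^ 2) (k : ℕ) :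
    (z ^ k)⁻¹ * x * z ^ k = x ^ (2 ^ k) := by
  induction k with
  | zero => simp
  | succ k ih =>
    have : (z ^ (k+1))⁻¹ * x * z ^ (k+1) = z⁻¹ * ((z ^ k)⁻¹ * x * z ^ k) * z := by
      rw [pow_succ]; group
    rw [this, ih]
    have h2 : z⁻¹ * x ^ (2 ^ k) * z = (z⁻¹ * x * z) ^ (2 ^ k) := by
      have := (conj_pow (i := 2 ^ k) (a := z⁻¹) (b := x)).symm
      simpa using this
    rw [h2, hrel, ← pow_mul, pow_succ]
    ring_nf


lemma aux_dvd (n : ℕ) (hn : 0 < n) (h : n ∣ 2 ^ n - 1) : n = 1 := by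
  by_contra hne
  have h1 : 1 < n := lt_of_le_of_ne hn (Ne.symm hne)
  set p := n.minFac with hp
  have hpp : p.Prime := Nat.minFac_prime (by omega)
  have hpn : p ∣ n := Nat.minFac_dvd n
  have hpd : p ∣ 2 ^ n - 1 := hpn.trans h
  have hodd : ¬ 2 ∣ 2 ^ n - 1 := by
    have h2 : 2 ∣ 2 ^ n := dvd_pow_self 2 hn.ne'
    have h3 : 1 ≤ 2 ^ n := Nat.one_le_two_pow
    omega
  have hp2 : p ≠ 2 := fun he => hodd (he ▸ hpd)
  haveI : Fact p.Prime := ⟨hpp⟩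
  have hmod : ((2 : ℕ) : ZMod p) ^ n = 1 := by
    have h2 : (2:ℕ) ^ n ≡ 1 [MOD p] := ((Nat.modEq_iff_dvd' (Nat.one_le_two_pow)).2 hpd).symm
    have := (ZMod.natCast_eq_natCast_iff _ _ _).2 h2
    push_cast at this
    exact_mod_cast this
  have h2ne : ((2 : ℕ) : ZMod p) ≠ 0 := by
    rw [Ne, ZMod.natCast_eq_zero_iff]
    intro hd
    have := (Nat.prime_dvd_prime_iff_eq hpp Nat.prime_two).1 hd
    exact hp2 this
  set d := orderOf ((2 : ℕ) : ZMod p) with hd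
  have hdn : d ∣ n := orderOf_dvd_of_pow_eq_one hmod
  have hp1 : 0 < p - 1 := by have := hpp.two_le; omega
  have hdp : d ∣ p - 1 := orderOf_dvd_of_pow_eq_one (ZMod.pow_card_sub_one_eq_one h2ne)
  have hdlt : d < p := lt_of_le_of_lt (Nat.le_of_dvd hp1 hdp) (by omega)
  have hd1 : d = 1 := by
    by_contra hdne
    have hdpos : 0 < d := Nat.pos_of_dvd_of_pos hdp hp1
    have hq : d.minFac.Prime := Nat.minFac_prime (by omega)
    have : p ≤ d.minFac := Nat.minFac_le_of_dvd hq.two_le ((Nat.minFac_dvd d).trans hdn)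
    have : d.minFac ≤ d := Nat.minFac_le hdpos
    omega
  have : ((2 : ℕ) : ZMod p) = 1 := orderOf_eq_one_iff.1 hd1
  have : (2:ℕ) ≡ 1 [MOD p] := by
    rw [← ZMod.natCast_eq_natCast_iff]
    simpa using this
  have : p ∣ 1 := (Nat.modEq_iff_dvd' (by norm_num)).1 this.symm
  simp at this
  exact hpp.one_lt.ne' this

theorem stmt_3 (F : Type) [Group F] [Finite F] (φ : Baumslag →* F)
    (hφ : Function.Surjective φ) : Subgroup.zpowers (φ bgT) = ⊤ := by
  set x := φ bgA with hx
  set y := φ bgT with hy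
  -- the relation in Baumslag
  have hrelB : (bgT⁻¹ * bgA * bgT)⁻¹ * bgA * (bgT⁻¹ * bgA * bgT) * (bgA ^ 2)⁻¹ = 1 := by
    have hmem : (((FreeGroup.of 1)⁻¹ * FreeGroup.of 0 * FreeGroup.of 1)⁻¹ * FreeGroup.of 0 *
        ((FreeGroup.of 1)⁻¹ * FreeGroup.of 0 * FreeGroup.of 1) *
        ((FreeGroup.of 0 : FreeGroup (Fin 2)) ^ 2)⁻¹) ∈
        Subgroup.normalClosure baumslagRels := Subgroup.subset_normalClosure rfl
    have := (QuotientGroup.eq_one_iff _).2 hmem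
    exact this
  have hrelF : (y⁻¹ * x * y)⁻¹ * x * (y⁻¹ * x * y) * (x ^ 2)⁻¹ = 1 := by
    have := congrArg φ hrelB
    simpa [hx, hy, map_mul, map_inv, map_pow] using this
  set z := y⁻¹ * x * y with hz
  have hrel : z⁻¹ * x * z = x ^ 2 := mul_inv_eq_one.1 hrelF
  have hordz : orderOf z = orderOf x := by
    have hsc : SemiconjBy y⁻¹ x z := by
      unfold SemiconjBy
      rw [hz]; group
    exact (SemiconjBy.orderOf_eq _ hsc).symm
  set n := orderOf x with hn
  have hnpos : 0 < n := by
    have : IsOfFinOrder x := isOfFinOrder_of_finite x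
    exact this.orderOf_pos
  have hzn : z ^ n = 1 := by rw [← hordz]; exact pow_orderOf_eq_one z
  have hxx : x = x ^ (2 ^ n) := by
    have := aux_conj x z hrel n
    rw [hzn] at this; simpa using this
  have hpow1 : x ^ (2 ^ n - 1) = 1 := by
    have h1 : 1 ≤ 2 ^ n := Nat.one_le_two_pow
    have : x ^ (2 ^ n - 1) * x = x ^ (2 ^ n) := by
      rw [← pow_succ]; congr 1; omega
    rw [← hxx] at this
    have h2 : x ^ (2 ^ n - 1) * x = 1 * x := by rw [this, one_mul]
    exact mul_right_cancel h2
  have hdvd : n ∣ 2 ^ n - 1 := orderOf_dvd_of_pow_eq_one hpow1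
  have hn1 : n = 1 := aux_dvd n hnpos hdvd
  have hx1 : x = 1 := orderOf_eq_one_iff.1 hn1
  -- generation
  rw [eq_top_iff]
  intro f _
  obtain ⟨g, rfl⟩ := hφ f
  refine QuotientGroup.induction_on g (fun w => ?_)
  refine FreeGroup.induction_on w ?_ ?_ ?_ ?_
  · show φ (1 : Baumslag) ∈ _
    simpa using Subgroup.one_mem _
  · intro i
    fin_cases i
    · show φ bgA ∈ _
      rw [← hx, hx1]; exact Subgroup.one_mem _
    · exact Subgroup.mem_zpowers _
  · intro i hi
    show φ ((PresentedGroup.mk baumslagRels (FreeGroup.of i))⁻¹) ∈ _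
    rw [map_inv]
    exact Subgroup.inv_mem _ hi
  · intro u v hu hv
    show φ (PresentedGroup.mk baumslagRels u * PresentedGroup.mk baumslagRels v) ∈ _
    rw [map_mul]
    exact Subgroup.mul_mem _ hu hv
end

section
/- Let G be a group generated by a and t, and suppose in every finite quotient of G the images of a and b := t⁻¹at are trivial. Let r be a word in a, b, t whose total t-exponent is 1. Then K = G/⟨⟨r⟩⟩ has no nontrivial finite quotients. -/
private lemma zpow_list_prod {F : Type*} [Group F] (x : F) :
    ∀ L : List ℤ, (L.map (x ^ ·)).prod = x ^ L.sum
  | [] => by simp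
  | c :: L => by simp [zpow_list_prod x L, zpow_add]

/-- Let `G` be generated by `a, t`, with `b = t⁻¹ a t`, and suppose the images of `a`
and `b` vanish in every finite quotient of `G`.  If `r = b t^{u₁ 0} a t^{-u₂ 0} ⋯
b t^{u₁ (l-1)} a t^{-u₂ (l-1)}` has total `t`-exponent `1`, then the quotient of `G` by
the normal closure of `r` has no nontrivial finite quotients. -/
theorem stmt_12 (G : Type*) [Group G] (a t : G)
    (hgen : Subgroup.closure ({a, t} : Set G) = ⊤)
    (b : G) (hb : b = t⁻¹ * a * t)
    (hfin : ∀ (F : Type) [Group F] [Finite F] (φ : G →* F),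
      Function.Surjective φ → φ a = 1 ∧ φ b = 1)
    (l : ℕ) (u₁ u₂ : Fin l → ℤ)
    (hsum : (∑ i, (u₁ i - u₂ i)) = 1)
    (r : G)
    (hr : r = (List.ofFn fun i : Fin l => b * t ^ u₁ i * a * t ^ (-u₂ i)).prod)
    (K : Type*) [Group K] (π : G →* K)
    (hπ : Function.Surjective π) (hker : π.ker = Subgroup.normalClosure {r}) :
    ∀ (F : Type) [Group F] [Finite F] (ψ : K →* F) (k : K), ψ k = 1 := by
  intro F _ _ ψ k
  set φ : G →* F := ψ.comp π with hφ
  obtain ⟨ha1, hb1⟩ := hfin φ.range φ.rangeRestrict φ.rangeRestrict_surjective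
  have ha : φ a = 1 := congrArg Subtype.val ha1
  have hbb : φ b = 1 := congrArg Subtype.val hb1
  have hrk : φ r = 1 := by
    have hmem : r ∈ π.ker := hker ▸ Subgroup.subset_normalClosure rfl
    simp [hφ, MonoidHom.mem_ker.mp hmem]
  have ht : φ t = 1 := by
    have h1 : φ r = φ t ^ (∑ i, (u₁ i - u₂ i)) := by
      rw [hr, map_list_prod, List.map_ofFn]
      have : ((fun i : Fin l => φ (b * t ^ u₁ i * a * t ^ (-u₂ i)))) =
          fun i : Fin l => φ t ^ (u₁ i - u₂ i) := by
        funext i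
        simp [ha, hbb, zpow_add, zpow_neg, sub_eq_add_neg]
      rw [Function.comp_def, this]
      have h2 : (List.ofFn fun i : Fin l => φ t ^ (u₁ i - u₂ i)) =
          (List.ofFn fun i : Fin l => u₁ i - u₂ i).map (φ t ^ ·) := by
        simp [List.map_ofFn, Function.comp_def]
      rw [h2, zpow_list_prod, List.sum_ofFn]
    rw [hrk, hsum, zpow_one] at h1
    exact h1.symm
  have hall : ∀ g, φ g = 1 := by
    have hle : Subgroup.closure ({a, t} : Set G) ≤ φ.ker := by
      rw [Subgroup.closure_le]
      rintro x (rfl | rfl) <;> simp [MonoidHom.mem_ker, ha, ht]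
    intro g
    exact hle (hgen ▸ Subgroup.mem_top g)
  obtain ⟨g, rfl⟩ := hπ k
  exact hall g
end

section
/- Higman's group ⟨a, b, c, d | b⁻¹ab = a², c⁻¹bc = b², d⁻¹cd = c², a⁻¹da = d²⟩ has no nontrivial finite quotients. -/
/-- Relators of Higman's group on generators `a = 0, b = 1, c = 2, d = 3`:
`b⁻¹ab a⁻²`, `c⁻¹bc b⁻²`, `d⁻¹cd c⁻²`, `a⁻¹da d⁻²`. -/
def higmanRels : Set (FreeGroup (Fin 4)) :=
  { (FreeGroup.of 1)⁻¹ * FreeGroup.of 0 * FreeGroup.of 1 * (FreeGroup.of 0 ^ 2)⁻¹,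
    (FreeGroup.of 2)⁻¹ * FreeGroup.of 1 * FreeGroup.of 2 * (FreeGroup.of 1 ^ 2)⁻¹,
    (FreeGroup.of 3)⁻¹ * FreeGroup.of 2 * FreeGroup.of 3 * (FreeGroup.of 2 ^ 2)⁻¹,
    (FreeGroup.of 0)⁻¹ * FreeGroup.of 3 * FreeGroup.of 0 * (FreeGroup.of 3 ^ 2)⁻¹ }

abbrev HigmanGroup : Type := PresentedGroup higmanRels

/-- If `x⁻¹ y x = y ^ 2` in a group, then `y ^ (2 ^ k) = x⁻¹ ^ k * y * x ^ k`. -/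
lemma higman_conj_pow {F : Type*} [Group F] {x y : F} (h : x⁻¹ * y * x = y ^ 2) (k : ℕ) :
    y ^ (2 ^ k) = x⁻¹ ^ k * y * x ^ k := by
  induction k with
  | zero => simp
  | succ k ih =>
    have : y ^ (2 ^ (k + 1)) = (y ^ (2 : ℕ)) ^ (2 ^ k) := by
      rw [← pow_mul, pow_succ, Nat.mul_comm]
    rw [this, ← h]
    have conj : (x⁻¹ * y * x) ^ (2 ^ k) = x⁻¹ * y ^ (2 ^ k) * x := by
      rw [show x⁻¹ * y * x = x⁻¹ * y * (x⁻¹)⁻¹ from by rw [inv_inv], conj_pow, inv_inv]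
    rw [conj, ih]
    group

/-- Key lemma: if `x⁻¹ y x = y²` in a finite group, the order of `y` divides `2 ^ orderOf x - 1`. -/
lemma higman_order_dvd {F : Type*} [Group F] [Finite F] {x y : F}
    (h : x⁻¹ * y * x = y ^ 2) : orderOf y ∣ 2 ^ orderOf x - 1 := by
  have hx : x ^ orderOf x = 1 := pow_orderOf_eq_one x
  have h1 : y ^ (2 ^ orderOf x) = y := by
    rw [higman_conj_pow h (orderOf x), hx, inv_pow, hx]
    simp
  have h2 : y ^ (2 ^ orderOf x - 1) = 1 := by
    have hpos : 1 ≤ 2 ^ orderOf x := Nat.one_le_two_pow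
    have : y ^ (2 ^ orderOf x - 1) * y = y := by
      rw [← pow_succ, Nat.sub_add_cancel hpos, h1]
    exact mul_right_cancel (by rw [this, one_mul])
  exact orderOf_dvd_of_pow_eq_one h2

/-- If an odd-looking prime `p` divides `2 ^ n - 1` with `n > 0`, then there is a
prime `q < p` dividing `n`. -/
lemma higman_smaller_prime {p n : ℕ} (hp : p.Prime) (hn : 0 < n) (hd : p ∣ 2 ^ n - 1) :
    ∃ q, q.Prime ∧ q ∣ n ∧ q < p := by
  have h2n : 2 ≤ 2 ^ n := by
    calc 2 = 2 ^ 1 := (pow_one 2).symm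
    _ ≤ 2 ^ n := Nat.pow_le_pow_right (by norm_num) hn
  -- p is odd
  have hp2 : p ≠ 2 := by
    rintro rfl
    obtain ⟨k, hk⟩ : Even (2 ^ n) := (Nat.even_pow).mpr ⟨even_two, hn.ne'⟩
    obtain ⟨c, hc⟩ := hd
    omega
  have hp3 : 3 ≤ p := by
    have := hp.two_le
    rcases Nat.lt_or_ge p 3 with h | h
    · omega
    · exact h
  haveI := Fact.mk hp
  -- 2 ^ n = 1 in ZMod p
  have hcast : ((2 ^ n - 1 : ℕ) : ZMod p) = 0 := (ZMod.natCast_eq_zero_iff _ _).mpr hd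
  have hpow : (2 : ZMod p) ^ n = 1 := by
    have h1le : (1 : ℕ) ≤ 2 ^ n := by omega
    rw [Nat.cast_sub h1le] at hcast
    push_cast at hcast
    linear_combination hcast
  have h2ne : (2 : ZMod p) ≠ 0 := by
    intro h0
    have : ((2 : ℕ) : ZMod p) = 0 := by exact_mod_cast h0
    have : p ∣ 2 := (ZMod.natCast_eq_zero_iff _ _).mp this
    have := Nat.le_of_dvd (by norm_num) this
    omega
  set d := orderOf (2 : ZMod p) with hdday
  have hdn : d ∣ n := orderOf_dvd_of_pow_eq_one hpow
  have hferm : (2 : ZMod p) ^ (p - 1) = 1 := ZMod.pow_card_sub_one_eq_one h2ne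
  have hdp : d ∣ p - 1 := orderOf_dvd_of_pow_eq_one hferm
  have hp1pos : 0 < p - 1 := by omega
  have hdpos : 0 < d := by
    rcases Nat.eq_zero_or_pos d with h0 | h0
    · rw [h0] at hdp; simp at hdp; omega
    · exact h0
  have hd1 : d ≠ 1 := by
    intro h1
    have : (2 : ZMod p) = 1 := orderOf_eq_one_iff.mp h1
    have : (1 : ZMod p) = 0 := by linear_combination this
    exact one_ne_zero this
  refine ⟨d.minFac, Nat.minFac_prime hd1, dvd_trans (Nat.minFac_dvd d) hdn, ?_⟩
  have hq_le : d.minFac ≤ d := Nat.minFac_le hdpos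
  have hd_le : d ≤ p - 1 := Nat.le_of_dvd hp1pos hdp
  omega

/-- The purely arithmetic heart: four positive integers in a cyclic divisibility
pattern `a ∣ 2^b - 1`, … must all be `1`. -/
lemma higman_nat {a b c d : ℕ} (ha : 0 < a) (hb : 0 < b) (hc : 0 < c) (hd : 0 < d)
    (h1 : a ∣ 2 ^ b - 1) (h2 : b ∣ 2 ^ c - 1) (h3 : c ∣ 2 ^ d - 1) (h4 : d ∣ 2 ^ a - 1) :
    a = 1 ∧ b = 1 ∧ c = 1 ∧ d = 1 := by
  set N := a * b * c * d with hN
  have hNpos : 0 < N := by positivity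
  by_cases hN1 : N = 1
  · have haN : a ∣ N := ⟨b * c * d, by rw [hN]; ring⟩
    have hbN : b ∣ N := ⟨a * c * d, by rw [hN]; ring⟩
    have hcN : c ∣ N := ⟨a * b * d, by rw [hN]; ring⟩
    have hdN : d ∣ N := ⟨a * b * c, by rw [hN]; ring⟩
    rw [hN1] at haN hbN hcN hdN
    exact ⟨Nat.dvd_one.mp haN, Nat.dvd_one.mp hbN, Nat.dvd_one.mp hcN, Nat.dvd_one.mp hdN⟩
  · exfalso
    set p := N.minFac with hpdef
    have hp : p.Prime := Nat.minFac_prime hN1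
    have hpN : p ∣ N := Nat.minFac_dvd N
    have haN : a ∣ N := ⟨b * c * d, by ring⟩
    have hbN : b ∣ N := ⟨a * c * d, by ring⟩
    have hcN : c ∣ N := ⟨a * b * d, by ring⟩
    have hdN : d ∣ N := ⟨a * b * c, by ring⟩
    have step : ∀ m n : ℕ, 0 < n → p ∣ m → m ∣ 2 ^ n - 1 → n ∣ N → False := by
      intro m n hnpos hpm hmn hnN
      obtain ⟨q, hq, hqn, hqp⟩ := higman_smaller_prime hp hnpos (hpm.trans hmn)
      have : p ≤ q := Nat.minFac_le_of_dvd hq.two_le (hqn.trans hnN)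
      omega
    have hsplit : p ∣ a ∨ p ∣ b ∨ p ∣ c ∨ p ∣ d := by
      rcases (Nat.Prime.dvd_mul hp).mp hpN with h | h
      · rcases (Nat.Prime.dvd_mul hp).mp h with h' | h'
        · rcases (Nat.Prime.dvd_mul hp).mp h' with h'' | h''
          · exact Or.inl h''
          · exact Or.inr (Or.inl h'')
        · exact Or.inr (Or.inr (Or.inl h'))
      · exact Or.inr (Or.inr (Or.inr h))
    rcases hsplit with h | h | h | h
    · exact step a b hb h h1 hbN
    · exact step b c hc h h2 hcN
    · exact step c d hd h h3 hdN
    · exact step d a ha h h4 haN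

theorem stmt_14 (F : Type) [Group F] [Finite F] (φ : HigmanGroup →* F)
    (g : HigmanGroup) : φ g = 1 := by
  classical
  -- Compose with the quotient map
  set ψ : FreeGroup (Fin 4) →* F :=
    φ.comp (QuotientGroup.mk' (Subgroup.normalClosure higmanRels)) with hψ
  -- each relator maps to 1 under ψ
  have hrel : ∀ r ∈ higmanRels, ψ r = 1 := by
    intro r hr
    have : (QuotientGroup.mk' (Subgroup.normalClosure higmanRels)) r = 1 :=
      (QuotientGroup.eq_one_iff r).mpr (Subgroup.subset_normalClosure hr)
    exact (congrArg φ this).trans (map_one φ)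
  set A := ψ (FreeGroup.of 0) with hA
  set B := ψ (FreeGroup.of 1) with hB
  set C := ψ (FreeGroup.of 2) with hC
  set D := ψ (FreeGroup.of 3) with hD
  have r1 : B⁻¹ * A * B = A ^ 2 := by
    have h := hrel _ (show ((FreeGroup.of 1)⁻¹ * FreeGroup.of 0 * FreeGroup.of 1 *
        ((FreeGroup.of 0 : FreeGroup (Fin 4)) ^ 2)⁻¹) ∈ higmanRels by
      simp [higmanRels])
    simp only [map_mul, map_inv, map_pow] at h
    rw [← hA, ← hB] at h
    have := mul_eq_one_iff_eq_inv.mp h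
    rw [this]; simp
  have r2 : C⁻¹ * B * C = B ^ 2 := by
    have h := hrel _ (show ((FreeGroup.of 2)⁻¹ * FreeGroup.of 1 * FreeGroup.of 2 *
        ((FreeGroup.of 1 : FreeGroup (Fin 4)) ^ 2)⁻¹) ∈ higmanRels by
      simp [higmanRels])
    simp only [map_mul, map_inv, map_pow] at h
    rw [← hB, ← hC] at h
    have := mul_eq_one_iff_eq_inv.mp h
    rw [this]; simp
  have r3 : D⁻¹ * C * D = C ^ 2 := by
    have h := hrel _ (show ((FreeGroup.of 3)⁻¹ * FreeGroup.of 2 * FreeGroup.of 3 *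
        ((FreeGroup.of 2 : FreeGroup (Fin 4)) ^ 2)⁻¹) ∈ higmanRels by
      simp [higmanRels])
    simp only [map_mul, map_inv, map_pow] at h
    rw [← hC, ← hD] at h
    have := mul_eq_one_iff_eq_inv.mp h
    rw [this]; simp
  have r4 : A⁻¹ * D * A = D ^ 2 := by
    have h := hrel _ (show ((FreeGroup.of 0)⁻¹ * FreeGroup.of 3 * FreeGroup.of 0 *
        ((FreeGroup.of 3 : FreeGroup (Fin 4)) ^ 2)⁻¹) ∈ higmanRels by
      simp [higmanRels])
    simp only [map_mul, map_inv, map_pow] at h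
    rw [← hD, ← hA] at h
    have := mul_eq_one_iff_eq_inv.mp h
    rw [this]; simp
  -- orders
  have d1 : orderOf A ∣ 2 ^ orderOf B - 1 := higman_order_dvd r1
  have d2 : orderOf B ∣ 2 ^ orderOf C - 1 := higman_order_dvd r2
  have d3 : orderOf C ∣ 2 ^ orderOf D - 1 := higman_order_dvd r3
  have d4 : orderOf D ∣ 2 ^ orderOf A - 1 := higman_order_dvd r4
  obtain ⟨eA, eB, eC, eD⟩ := higman_nat (orderOf_pos A) (orderOf_pos B)
    (orderOf_pos C) (orderOf_pos D) d1 d2 d3 d4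
  have hA1 : A = 1 := orderOf_eq_one_iff.mp eA
  have hB1 : B = 1 := orderOf_eq_one_iff.mp eB
  have hC1 : C = 1 := orderOf_eq_one_iff.mp eC
  have hD1 : D = 1 := orderOf_eq_one_iff.mp eD
  -- ψ is the trivial homomorphism
  have hψ1 : ψ = 1 := by
    apply FreeGroup.ext_hom
    intro i
    fin_cases i
    · exact hA1
    · exact hB1
    · exact hC1
    · exact hD1
  obtain ⟨w, rfl⟩ := QuotientGroup.mk'_surjective (Subgroup.normalClosure higmanRels) g
  have : φ ((QuotientGroup.mk' (Subgroup.normalClosure higmanRels)) w) = ψ w := rfl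
  rw [this, hψ1]
  rfl
end
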